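/- Let φ be a probability density on [0,1) satisfying φ(x) ~ c_φ(1-x)^β as x→1⁻ with c_φ > 0 and 0 < β < 1, and let σ² > 0. Then, as the integer t → ∞, σ² ∫₀¹ x^t/(1-x²) φ(x) dx ~ σ² (c_φ/2) Γ(β) t^{-β}, i.e. the ratio of the left-hand side to σ² (c_φ/2) Γ(β) t^{-β} tends to 1. -/

import Mathlib

open MeasureTheory Filter Topology

lemma beta_val_aux {β : ℝ} (hβ : 0 < β) (t : ℕ) :
    ∫ x in Set.Ico (0:ℝ) 1, x ^ t * (1 - x) ^ (β - 1) =
      (Nat.factorial t : ℝ) / ∏ j ∈ Finset.range (t + 1), (β + j) := by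
  have h2 : Complex.betaIntegral ((t:ℂ)+1) β
      = ((∫ x in (0:ℝ)..1, x ^ t * (1 - x) ^ (β-1) : ℝ) : ℂ) := by
    rw [Complex.betaIntegral, ← intervalIntegral.integral_ofReal]
    refine intervalIntegral.integral_congr fun x hx => ?_
    rw [Set.uIcc_of_le zero_le_one] at hx
    rw [add_sub_cancel_right, Complex.cpow_natCast,
      show ((β:ℂ) - 1) = ((β - 1 : ℝ) : ℂ) by push_cast; ring,
      show ((1:ℂ) - (x:ℂ)) = ((1 - x : ℝ) : ℂ) by push_cast; ring,
      ← Complex.ofReal_cpow (by linarith [hx.2])]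
    push_cast; ring
  have h3 : Complex.betaIntegral ((t:ℂ)+1) β
      = (Nat.factorial t : ℂ) / ∏ j ∈ Finset.range (t + 1), ((β:ℂ) + j) := by
    rw [← Complex.betaIntegral_symm,
      Complex.betaIntegral_eval_nat_add_one_right (by simpa using hβ) t]
  have h4 : ((∫ x in (0:ℝ)..1, x ^ t * (1 - x) ^ (β-1) : ℝ) : ℂ)
      = (((Nat.factorial t : ℝ) / ∏ j ∈ Finset.range (t + 1), (β + j) : ℝ) : ℂ) := by
    rw [← h2, h3]; push_cast; ring
  have h5 := Complex.ofReal_inj.mp h4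
  rw [← h5, intervalIntegral.integral_of_le zero_le_one,
    MeasureTheory.integral_Ico_eq_integral_Ioo, MeasureTheory.integral_Ioc_eq_integral_Ioo]

lemma gammaSeq_aux (β : ℝ) :
    Tendsto (fun t : ℕ => (t:ℝ) ^ β *
      ((Nat.factorial t : ℝ) / ∏ j ∈ Finset.range (t + 1), (β + j))) atTop
      (𝓝 (Real.Gamma β)) := by
  refine (Real.GammaSeq_tendsto_Gamma β).congr fun n => ?_
  rw [Real.GammaSeq, mul_div_assoc]

lemma geom_aux {a : ℝ} (β : ℝ) (ha0 : 0 < a) (ha1 : a < 1) :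
    Tendsto (fun t : ℕ => (t:ℝ) ^ β * a ^ t) atTop (𝓝 0) := by
  have hb : 0 < -Real.log a := by linarith [Real.log_neg ha0 ha1]
  have h := (tendsto_rpow_mul_exp_neg_mul_atTop_nhds_zero β (-Real.log a) hb).comp
    tendsto_natCast_atTop_atTop
  refine h.congr fun t => ?_
  simp only [Function.comp_apply]
  congr 1
  rw [show -(-Real.log a) * (t:ℝ) = (t:ℝ) * Real.log a by ring, Real.exp_nat_mul,
    Real.exp_log ha0]

set_option maxHeartbeats 1000000 in
/-- Covariance asymptotics of the random-coefficient AR(1) process: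
if the mixing density `φ` satisfies `φ(x) ~ c_φ (1-x)^β` as `x → 1⁻` with `0 < β < 1`,
then `σ² ∫₀¹ x^t/(1-x²) φ(x) dx ~ σ² (c_φ/2) Γ(β) t^{-β}` as the integer `t → ∞`. -/
theorem aggregated_AR1_covariance_asymptotics
    (φ : ℝ → ℝ) (cφ β σ2 : ℝ) (hc : 0 < cφ) (hβ0 : 0 < β) (hβ1 : β < 1) (hσ : 0 < σ2)
    (hmeas : Measurable φ)
    (hnonneg : ∀ x ∈ Set.Ico (0:ℝ) 1, 0 ≤ φ x)
    (hprob : ∫ x in Set.Ico (0:ℝ) 1, φ x = 1)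
    (hasymp : Tendsto (fun x => φ x / (cφ * (1 - x) ^ β)) (𝓝[<] (1:ℝ)) (𝓝 1)) :
    Tendsto (fun t : ℕ =>
        (σ2 * ∫ x in Set.Ico (0:ℝ) 1, x ^ t / (1 - x ^ 2) * φ x) /
          (σ2 * (cφ / 2) * Real.Gamma β * (t : ℝ) ^ (-β)))
      atTop (𝓝 1) := by
  have hβm1 : (-1:ℝ) < β - 1 := by linarith
  set Γβ := Real.Gamma β with hΓβdef
  have hΓ : 0 < Γβ := Real.Gamma_pos_of_pos hβ0
  set C : ℝ := cφ / 2 * Γβ with hCdef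
  have hC : 0 < C := by positivity
  set ψ : ℝ → ℝ := fun x => φ x / (1 - x ^ 2) with hψdef
  have hψmeas : Measurable ψ :=
    hmeas.div (measurable_const.sub (measurable_id.pow_const 2))
  have hint_eq : ∀ t : ℕ, (fun x : ℝ => x ^ t / (1 - x ^ 2) * φ x) = fun x => x ^ t * ψ x := by
    intro t; funext x; simp only [hψdef]; ring
  -- φ is integrable
  have hφint : IntegrableOn φ (Set.Ico (0:ℝ) 1) := by
    by_contra h
    rw [MeasureTheory.integral_undef h] at hprob
    exact one_ne_zero hprob.symm
  -- (1-x)^(β-1) is integrable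
  have hrmeas : Measurable (fun x : ℝ => (1 - x) ^ (β - 1)) := by fun_prop
  have hrpow_int : IntegrableOn (fun x : ℝ => (1 - x) ^ (β - 1)) (Set.Ico (0:ℝ) 1) := by
    have h := ((intervalIntegral.intervalIntegrable_rpow' hβm1 (a := 0) (b := 1)).comp_sub_left
      1).symm
    simp only [sub_zero, sub_self] at h
    rw [intervalIntegrable_iff_integrableOn_Ioo_of_le zero_le_one] at h
    exact (integrableOn_Ico_iff_integrableOn_Ioo).mpr h
  -- the ratio function
  set q : ℝ → ℝ := fun x => (φ x / (cφ * (1 - x) ^ β)) * (2 / (1 + x)) with hqdef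
  have hq : Tendsto q (𝓝[<] (1:ℝ)) (𝓝 1) := by
    have hcont : ContinuousAt (fun x : ℝ => 2 / (1 + x)) 1 := by
      apply ContinuousAt.div continuousAt_const (continuousAt_const.add continuousAt_id)
      norm_num
    have h2 : Tendsto (fun x : ℝ => 2 / (1 + x)) (𝓝[<] (1:ℝ)) (𝓝 (2 / (1 + 1))) :=
      (hcont.continuousWithinAt (s := Set.Iio 1)).tendsto
    have h3 := hasymp.mul h2
    norm_num at h3
    exact h3
  -- identity relating ψ and q
  have hψid : ∀ x : ℝ, 0 < x → x < 1 → ψ x = (cφ / 2 * (1 - x) ^ (β - 1)) * q x := by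
    intro x hx0 hx1
    have h1x : 0 < 1 - x := by linarith
    have h1px : 0 < 1 + x := by linarith
    have h1x2 : 0 < 1 - x ^ 2 := by
      rw [show (1:ℝ) - x ^ 2 = (1 - x) * (1 + x) by ring]; exact mul_pos h1x h1px
    have hpow : (1 - x) ^ β = (1 - x) ^ (β - 1) * (1 - x) := by
      rw [show β = (β - 1) + 1 by ring, Real.rpow_add_one h1x.ne']
      ring_nf
    have hrp : 0 < (1 - x) ^ (β - 1) := Real.rpow_pos_of_pos h1x _
    simp only [hψdef, hqdef, hpow]
    rw [div_mul_eq_mul_div, div_mul_eq_mul_div]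
    field_simp
    ring
  -- choice of a
  have hchoice : ∀ ε1 : ℝ, 0 < ε1 → ∃ a : ℝ, 0 < a ∧ a < 1 ∧
      ∀ x ∈ Set.Ioo a 1, |q x - 1| ≤ ε1 := by
    intro ε1 hε1
    have h := Metric.tendsto_nhds.mp hq ε1 hε1
    obtain ⟨l, hl, hsub⟩ := mem_nhdsLT_iff_exists_Ioo_subset.mp h
    refine ⟨max l (1/2), lt_of_lt_of_le (by norm_num) (le_max_right _ _),
      max_lt hl (by norm_num), fun x hx => ?_⟩
    have hx' : x ∈ Set.Ioo l 1 := ⟨lt_of_le_of_lt (le_max_left _ _) hx.1, hx.2⟩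
    have := hsub hx'
    rw [Set.mem_setOf_eq, Real.dist_eq] at this
    exact this.le
  -- pointwise bound on Ioo a 1
  have hptwise : ∀ ε1 a : ℝ, 0 ≤ a → (∀ x ∈ Set.Ioo a 1, |q x - 1| ≤ ε1) →
      ∀ x ∈ Set.Ioo a 1,
        |ψ x - cφ / 2 * (1 - x) ^ (β - 1)| ≤ ε1 * (cφ / 2 * (1 - x) ^ (β - 1)) := by
    intro ε1 a ha0 hba x hx
    have hx0 : 0 < x := lt_of_le_of_lt ha0 hx.1
    have h1x : (0:ℝ) ≤ 1 - x := by linarith [hx.2]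
    have hpos : 0 ≤ cφ / 2 * (1 - x) ^ (β - 1) := by
      have := Real.rpow_nonneg h1x (β - 1); positivity
    rw [hψid x hx0 hx.2,
      show (cφ / 2 * (1 - x) ^ (β - 1)) * q x - cφ / 2 * (1 - x) ^ (β - 1)
        = (cφ / 2 * (1 - x) ^ (β - 1)) * (q x - 1) by ring, abs_mul, abs_of_nonneg hpos,
      mul_comm]
    exact mul_le_mul_of_nonneg_right (hba x hx) hpos
  -- global integrability of ψ
  obtain ⟨a0, ha00, ha01, hqa0⟩ := hchoice 1 one_pos
  have hψ_near_int : IntegrableOn ψ (Set.Ioo a0 1) := by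
    have hsub : Set.Ioo a0 1 ⊆ Set.Ico (0:ℝ) 1 := fun x hx => ⟨(ha00.trans hx.1).le, hx.2⟩
    refine Integrable.mono ((hrpow_int.mono_set hsub).const_mul (2 * (cφ / 2)))
      hψmeas.aestronglyMeasurable ?_
    rw [ae_restrict_iff' measurableSet_Ioo]
    filter_upwards with x hx
    have h1x : (0:ℝ) ≤ 1 - x := by linarith [hx.2]
    have hrp : 0 ≤ (1 - x) ^ (β - 1) := Real.rpow_nonneg h1x _
    have hb := hptwise 1 a0 ha00.le hqa0 x hx
    have : |ψ x| ≤ 2 * (cφ / 2 * (1 - x) ^ (β - 1)) := by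
      calc |ψ x| ≤ |ψ x - cφ / 2 * (1 - x) ^ (β - 1)| + |cφ / 2 * (1 - x) ^ (β - 1)| := by
            have := abs_sub_abs_le_abs_sub (ψ x) (cφ / 2 * (1 - x) ^ (β - 1))
            have h2 := abs_add_le (ψ x - cφ / 2 * (1 - x) ^ (β - 1)) (cφ / 2 * (1 - x) ^ (β - 1))
            simpa using h2
        _ ≤ 1 * (cφ / 2 * (1 - x) ^ (β - 1)) + (cφ / 2 * (1 - x) ^ (β - 1)) := by
            refine add_le_add hb (le_of_eq (abs_of_nonneg (by positivity)))
        _ = 2 * (cφ / 2 * (1 - x) ^ (β - 1)) := by ring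
    rw [Real.norm_eq_abs, Real.norm_eq_abs]
    refine this.trans ?_
    rw [show (2 : ℝ) * (cφ / 2 * (1 - x) ^ (β - 1)) = 2 * (cφ / 2) * (1 - x) ^ (β - 1) by ring]
    exact le_abs_self _
  have hψ_int : IntegrableOn ψ (Set.Ico (0:ℝ) 1) := by
    rw [← Set.Ico_union_Ico_eq_Ico ha00.le ha01.le]
    apply IntegrableOn.union
    · have hpos2 : (0:ℝ) < 1 - a0 ^ 2 := by
        rw [show (1:ℝ) - a0 ^ 2 = (1 - a0) * (1 + a0) by ring]
        exact mul_pos (by linarith) (by linarith)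
      refine Integrable.mono ((hφint.mono_set (Set.Ico_subset_Ico_right ha01.le)).const_mul
        (1 - a0 ^ 2)⁻¹) hψmeas.aestronglyMeasurable ?_
      rw [ae_restrict_iff' measurableSet_Ico]
      filter_upwards with x hx
      have hx2 : 0 < 1 - x ^ 2 := by
        rw [show (1:ℝ) - x ^ 2 = (1 - x) * (1 + x) by ring]
        exact mul_pos (by linarith [hx.2, ha01]) (by linarith [hx.1])
      have h12 : 1 - a0 ^ 2 ≤ 1 - x ^ 2 := by
        have := pow_le_pow_left₀ hx.1 hx.2.le 2; linarith
      have hφx : 0 ≤ φ x := hnonneg x ⟨hx.1, hx.2.trans ha01⟩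
      rw [Real.norm_eq_abs, Real.norm_eq_abs, hψdef]
      have h1 : |φ x / (1 - x ^ 2)| = φ x / (1 - x ^ 2) := abs_of_nonneg (by positivity)
      rw [h1]
      calc φ x / (1 - x ^ 2) ≤ φ x / (1 - a0 ^ 2) := by gcongr
        _ = (1 - a0 ^ 2)⁻¹ * φ x := by rw [inv_mul_eq_div]
        _ ≤ |(1 - a0 ^ 2)⁻¹ * φ x| := le_abs_self _
    · exact (integrableOn_Ico_iff_integrableOn_Ioo).mpr hψ_near_int
  have hψ_nonneg : ∀ x ∈ Set.Ico (0:ℝ) 1, 0 ≤ ψ x := by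
    intro x hx
    have : 0 < 1 - x ^ 2 := by
      rw [show (1:ℝ) - x ^ 2 = (1 - x) * (1 + x) by ring]
      exact mul_pos (by linarith [hx.2]) (by linarith [hx.1])
    exact div_nonneg (hnonneg x hx) this.le
  -- multiplying by x^t preserves integrability
  have hmulpow : ∀ (t : ℕ) (F : ℝ → ℝ), Measurable F → IntegrableOn F (Set.Ico (0:ℝ) 1) →
      IntegrableOn (fun x => x ^ t * F x) (Set.Ico (0:ℝ) 1) := by
    intro t F hFm hFi
    refine Integrable.mono hFi ((measurable_id.pow_const t).mul hFm).aestronglyMeasurable ?_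
    rw [ae_restrict_iff' measurableSet_Ico]
    filter_upwards with x hx
    rw [Real.norm_eq_abs, Real.norm_eq_abs, abs_mul]
    have h1 : |x ^ t| ≤ 1 := by
      rw [abs_pow]
      exact pow_le_one₀ (abs_nonneg x) (abs_le.mpr ⟨by linarith [hx.1], hx.2.le⟩)
    calc |x ^ t| * |F x| ≤ 1 * |F x| := mul_le_mul_of_nonneg_right h1 (abs_nonneg _)
      _ = |F x| := one_mul _
  have hψt : ∀ t : ℕ, IntegrableOn (fun x => x ^ t * ψ x) (Set.Ico (0:ℝ) 1) :=
    fun t => hmulpow t ψ hψmeas hψ_int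
  have hgt : ∀ t : ℕ, IntegrableOn (fun x => x ^ t * (1 - x) ^ (β - 1)) (Set.Ico (0:ℝ) 1) :=
    fun t => hmulpow t _ hrmeas hrpow_int
  -- g and its limit
  set g : ℕ → ℝ := fun t => ∫ x in Set.Ico (0:ℝ) 1, x ^ t * (1 - x) ^ (β - 1) with hgdef
  have hgG : Tendsto (fun t : ℕ => (t:ℝ) ^ β * g t) atTop (𝓝 Γβ) := by
    refine (gammaSeq_aux β).congr fun t => ?_
    simp only [hgdef]
    rw [beta_val_aux hβ0 t]
  -- KEY limit
  have key : Tendsto (fun t : ℕ =>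
      (∫ x in Set.Ico (0:ℝ) 1, x ^ t / (1 - x ^ 2) * φ x) * (t:ℝ) ^ β) atTop (𝓝 C) := by
    rw [Metric.tendsto_atTop]
    intro ε hε
    set K : ℝ := cφ / 2 * (Γβ + 1) + cφ / 2 + 1 with hKdef
    have hKpos : 0 < K := by positivity
    set ε1 : ℝ := min 1 (ε / (2 * K)) with hε1def
    have hε1 : 0 < ε1 := lt_min one_pos (by positivity)
    have hε11 : ε1 ≤ 1 := min_le_left _ _
    have hε1K : ε1 * K ≤ ε / 2 := by
      calc ε1 * K ≤ ε / (2 * K) * K := mul_le_mul_of_nonneg_right (min_le_right _ _) hKpos.le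
        _ = ε / 2 := by field_simp
    obtain ⟨a, ha0, ha1, hqa⟩ := hchoice ε1 hε1
    have hIoosub : Set.Ioo a 1 ⊆ Set.Ico (0:ℝ) 1 := fun x hx => ⟨(ha0.trans hx.1).le, hx.2⟩
    have hIcosub : Set.Ico (0:ℝ) a ⊆ Set.Ico (0:ℝ) 1 := Set.Ico_subset_Ico_right ha1.le
    have hIcosub2 : Set.Ico a 1 ⊆ Set.Ico (0:ℝ) 1 := Set.Ico_subset_Ico_left ha0.le
    have h1a : (0:ℝ) < 1 - a := by linarith
    have h1a2 : (0:ℝ) < 1 - a ^ 2 := by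
      rw [show (1:ℝ) - a ^ 2 = (1 - a) * (1 + a) by ring]
      exact mul_pos (by linarith) (by linarith)
    set K1 : ℝ := (1 - a) ^ (β - 1) with hK1def
    set K2 : ℝ := (1 - a ^ 2)⁻¹ with hK2def
    have hK1 : 0 ≤ K1 := Real.rpow_nonneg h1a.le _
    have hK2 : 0 ≤ K2 := inv_nonneg.mpr h1a2.le
    set M : ℝ := cφ / 2 * K1 + K2 with hMdef
    have hM : 0 ≤ M := by positivity
    obtain ⟨N1, hN1⟩ := Metric.tendsto_atTop.mp hgG ε1 hε1
    obtain ⟨N2, hN2⟩ := Metric.tendsto_atTop.mp ((geom_aux β ha0 ha1).mul_const M) ε1 hε1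
    refine ⟨max N1 N2, fun t ht => ?_⟩
    have hN1t := hN1 t (le_trans (le_max_left _ _) ht)
    have hN2t := hN2 t (le_trans (le_max_right _ _) ht)
    rw [Real.dist_eq] at hN1t hN2t ⊢
    rw [zero_mul, sub_zero] at hN2t
    set tb : ℝ := (t:ℝ) ^ β with htbdef
    have htb0 : 0 ≤ tb := Real.rpow_nonneg (Nat.cast_nonneg t) β
    have hat0 : (0:ℝ) ≤ a ^ t := pow_nonneg ha0.le t
    -- split the integrals
    set F : ℝ := ∫ x in Set.Ico (0:ℝ) a, x ^ t * ψ x with hFdef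
    set N : ℝ := ∫ x in Set.Ioo a 1, x ^ t * ψ x with hNdef
    set GF : ℝ := ∫ x in Set.Ico (0:ℝ) a, x ^ t * (1 - x) ^ (β - 1) with hGFdef
    set GN : ℝ := ∫ x in Set.Ioo a 1, x ^ t * (1 - x) ^ (β - 1) with hGNdef
    have hsplitI : (∫ x in Set.Ico (0:ℝ) 1, x ^ t / (1 - x ^ 2) * φ x) = F + N := by
      rw [hint_eq t, ← Set.Ico_union_Ico_eq_Ico ha0.le ha1.le,
        setIntegral_union Set.Ico_disjoint_Ico_same measurableSet_Ico
          ((hψt t).mono_set hIcosub) ((hψt t).mono_set hIcosub2),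
        MeasureTheory.integral_Ico_eq_integral_Ioo (f := fun x => x ^ t * ψ x) (x := a) (y := 1)]
    have hsplitg : g t = GF + GN := by
      simp only [hgdef]
      rw [← Set.Ico_union_Ico_eq_Ico ha0.le ha1.le,
        setIntegral_union Set.Ico_disjoint_Ico_same measurableSet_Ico
          ((hgt t).mono_set hIcosub) ((hgt t).mono_set hIcosub2),
        MeasureTheory.integral_Ico_eq_integral_Ioo
          (f := fun x => x ^ t * (1 - x) ^ (β - 1)) (x := a) (y := 1)]
    have hGF0 : 0 ≤ GF := setIntegral_nonneg measurableSet_Ico fun x hx =>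
      mul_nonneg (pow_nonneg hx.1 t) (Real.rpow_nonneg (by linarith [hx.2] : (0:ℝ) ≤ 1 - x) _)
    have hGN0 : 0 ≤ GN := setIntegral_nonneg measurableSet_Ioo fun x hx =>
      mul_nonneg (pow_nonneg (ha0.trans hx.1).le t)
        (Real.rpow_nonneg (by linarith [hx.2] : (0:ℝ) ≤ 1 - x) _)
    have hg0 : 0 ≤ g t := by rw [hsplitg]; positivity
    have hGN_le : GN ≤ g t := by rw [hsplitg]; linarith
    -- bound on GF
    have hGF_le : GF ≤ a ^ t * K1 := by
      have hconst : IntegrableOn (fun _ : ℝ => a ^ t * K1) (Set.Ico (0:ℝ) a) := by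
        exact integrableOn_const measure_Ico_lt_top.ne
      have hle : GF ≤ ∫ _ in Set.Ico (0:ℝ) a, a ^ t * K1 := by
        refine setIntegral_mono_on ((hgt t).mono_set hIcosub) hconst measurableSet_Ico ?_
        intro x hx
        have h1x : (0:ℝ) < 1 - x := by linarith [hx.2, ha1]
        refine mul_le_mul (pow_le_pow_left₀ hx.1 hx.2.le t)
          (Real.rpow_le_rpow_of_nonpos h1a (by linarith [hx.2]) (by linarith))
          (Real.rpow_nonneg h1x.le _) hat0
      refine hle.trans ?_
      rw [setIntegral_const, smul_eq_mul, Real.volume_real_Ico]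
      rw [show a - 0 = a by ring, max_eq_left ha0.le]
      calc a * (a ^ t * K1) ≤ 1 * (a ^ t * K1) :=
            mul_le_mul_of_nonneg_right ha1.le (mul_nonneg hat0 hK1)
        _ = a ^ t * K1 := one_mul _
    -- bound on F
    have hF_le : |F| ≤ a ^ t * K2 := by
      have hF0 : 0 ≤ F := setIntegral_nonneg measurableSet_Ico fun x hx =>
        mul_nonneg (pow_nonneg hx.1 t) (hψ_nonneg x (hIcosub hx))
      rw [abs_of_nonneg hF0]
      have hle : F ≤ ∫ x in Set.Ico (0:ℝ) a, a ^ t * (K2 * φ x) := by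
        refine setIntegral_mono_on ((hψt t).mono_set hIcosub)
          (((hφint.mono_set hIcosub).const_mul K2).const_mul (a ^ t)) measurableSet_Ico ?_
        intro x hx
        have hx2 : 0 < 1 - x ^ 2 := by
          rw [show (1:ℝ) - x ^ 2 = (1 - x) * (1 + x) by ring]
          exact mul_pos (by linarith [hx.2, ha1]) (by linarith [hx.1])
        have h12 : 1 - a ^ 2 ≤ 1 - x ^ 2 := by
          have := pow_le_pow_left₀ hx.1 hx.2.le 2; linarith
        have hφx : 0 ≤ φ x := hnonneg x (hIcosub hx)
        have hψle : ψ x ≤ K2 * φ x := by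
          simp only [hψdef, hK2def, inv_mul_eq_div]
          gcongr
        refine mul_le_mul (pow_le_pow_left₀ hx.1 hx.2.le t) hψle
          (hψ_nonneg x (hIcosub hx)) hat0
      refine hle.trans ?_
      rw [MeasureTheory.integral_const_mul, MeasureTheory.integral_const_mul]
      have hφle : ∫ x in Set.Ico (0:ℝ) a, φ x ≤ ∫ x in Set.Ico (0:ℝ) 1, φ x := by
        refine setIntegral_mono_set hφint ?_ (HasSubset.Subset.eventuallyLE hIcosub)
        exact (ae_restrict_iff' measurableSet_Ico).mpr (ae_of_all _ hnonneg)
      rw [hprob] at hφle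
      have hφ0 : 0 ≤ ∫ x in Set.Ico (0:ℝ) a, φ x :=
        setIntegral_nonneg measurableSet_Ico fun x hx => hnonneg x (hIcosub hx)
      calc a ^ t * (K2 * ∫ x in Set.Ico (0:ℝ) a, φ x) ≤ a ^ t * (K2 * 1) := by
            refine mul_le_mul_of_nonneg_left (mul_le_mul_of_nonneg_left hφle hK2) hat0
        _ = a ^ t * K2 := by ring
    -- bound on N
    have hN_close : |N - cφ / 2 * GN| ≤ ε1 * (cφ / 2) * g t := by
      have hint1 : IntegrableOn (fun x => x ^ t * ψ x) (Set.Ioo a 1) :=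
        (hψt t).mono_set hIoosub
      have hint2 : IntegrableOn (fun x => cφ / 2 * (x ^ t * (1 - x) ^ (β - 1)))
          (Set.Ioo a 1) := ((hgt t).mono_set hIoosub).const_mul _
      have heq2 : cφ / 2 * GN = ∫ x in Set.Ioo a 1, cφ / 2 * (x ^ t * (1 - x) ^ (β - 1)) := by
        rw [hGNdef, MeasureTheory.integral_const_mul]
      rw [heq2, ← integral_sub hint1 hint2]
      calc |∫ x in Set.Ioo a 1,
            (x ^ t * ψ x - cφ / 2 * (x ^ t * (1 - x) ^ (β - 1)))|
          ≤ ∫ x in Set.Ioo a 1,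
            |x ^ t * ψ x - cφ / 2 * (x ^ t * (1 - x) ^ (β - 1))| := by
            simpa [Real.norm_eq_abs] using
              MeasureTheory.norm_integral_le_integral_norm
                (μ := volume.restrict (Set.Ioo a 1))
                (fun x => x ^ t * ψ x - cφ / 2 * (x ^ t * (1 - x) ^ (β - 1)))
        _ ≤ ∫ x in Set.Ioo a 1, ε1 * (cφ / 2) * (x ^ t * (1 - x) ^ (β - 1)) := by
            refine setIntegral_mono_on (hint1.sub hint2).abs
              (((hgt t).mono_set hIoosub).const_mul _) measurableSet_Ioo ?_
            intro x hx
            have hx0 : 0 ≤ x := (ha0.trans hx.1).le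
            have hb := hptwise ε1 a ha0.le hqa x hx
            calc |x ^ t * ψ x - cφ / 2 * (x ^ t * (1 - x) ^ (β - 1))|
                = x ^ t * |ψ x - cφ / 2 * (1 - x) ^ (β - 1)| := by
                  rw [show x ^ t * ψ x - cφ / 2 * (x ^ t * (1 - x) ^ (β - 1))
                    = x ^ t * (ψ x - cφ / 2 * (1 - x) ^ (β - 1)) by ring, abs_mul,
                    abs_of_nonneg (pow_nonneg hx0 t)]
              _ ≤ x ^ t * (ε1 * (cφ / 2 * (1 - x) ^ (β - 1))) :=
                  mul_le_mul_of_nonneg_left hb (pow_nonneg hx0 t)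
              _ = ε1 * (cφ / 2) * (x ^ t * (1 - x) ^ (β - 1)) := by ring
        _ = ε1 * (cφ / 2) * GN := by rw [MeasureTheory.integral_const_mul, hGNdef]
        _ ≤ ε1 * (cφ / 2) * g t := by
            refine mul_le_mul_of_nonneg_left hGN_le (by positivity)
    -- combine
    have hIbound : |(F + N) - cφ / 2 * g t| ≤ ε1 * (cφ / 2) * g t + a ^ t * M := by
      calc |(F + N) - cφ / 2 * g t|
          = |(N - cφ / 2 * GN) + (F - cφ / 2 * GF)| := by rw [hsplitg]; ring_nf
        _ ≤ |N - cφ / 2 * GN| + |F - cφ / 2 * GF| := abs_add_le _ _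
        _ ≤ ε1 * (cφ / 2) * g t + (|F| + cφ / 2 * GF) := by
            refine add_le_add hN_close ?_
            calc |F - cφ / 2 * GF| ≤ |F| + |cφ / 2 * GF| := abs_sub _ _
              _ = |F| + cφ / 2 * GF := by
                rw [abs_of_nonneg (mul_nonneg (by positivity : (0:ℝ) ≤ cφ / 2) hGF0)]
        _ ≤ ε1 * (cφ / 2) * g t + (a ^ t * K2 + cφ / 2 * (a ^ t * K1)) := by
            refine add_le_add le_rfl (add_le_add hF_le
              (mul_le_mul_of_nonneg_left hGF_le (by positivity)))
        _ = ε1 * (cφ / 2) * g t + a ^ t * M := by rw [hMdef]; ring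
    have htbg : tb * g t ≤ Γβ + 1 := by
      have := abs_lt.mp hN1t
      linarith [this.2]
    have htbat : tb * a ^ t * M ≤ ε1 := by
      have := le_abs_self (tb * a ^ t * M)
      linarith [hN2t]
    rw [hsplitI]
    calc |(F + N) * tb - C| = |tb * ((F + N) - cφ / 2 * g t) + cφ / 2 * (tb * g t - Γβ)| := by
          rw [hCdef]; ring_nf
      _ ≤ tb * |(F + N) - cφ / 2 * g t| + cφ / 2 * |tb * g t - Γβ| := by
          refine (abs_add_le _ _).trans ?_
          rw [abs_mul, abs_mul, abs_of_nonneg htb0, abs_of_nonneg (by positivity : (0:ℝ) ≤ cφ/2)]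
      _ ≤ tb * (ε1 * (cφ / 2) * g t + a ^ t * M) + cφ / 2 * ε1 := by
          refine add_le_add (mul_le_mul_of_nonneg_left hIbound htb0)
            (mul_le_mul_of_nonneg_left hN1t.le (by positivity))
      _ = ε1 * (cφ / 2) * (tb * g t) + tb * a ^ t * M + cφ / 2 * ε1 := by ring
      _ ≤ ε1 * (cφ / 2) * (Γβ + 1) + ε1 + cφ / 2 * ε1 := by
          refine add_le_add (add_le_add (mul_le_mul_of_nonneg_left htbg (by positivity))
            htbat) le_rfl
      _ = ε1 * K := by rw [hKdef]; ring
      _ ≤ ε / 2 := hε1K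
      _ < ε := by linarith
  -- final assembly
  have heq : ∀ᶠ t : ℕ in atTop,
      ((∫ x in Set.Ico (0:ℝ) 1, x ^ t / (1 - x ^ 2) * φ x) * (t:ℝ) ^ β) / C =
      (σ2 * ∫ x in Set.Ico (0:ℝ) 1, x ^ t / (1 - x ^ 2) * φ x) /
        (σ2 * (cφ / 2) * Real.Gamma β * (t : ℝ) ^ (-β)) := by
    filter_upwards [eventually_ge_atTop 1] with t ht
    have htpos : (0:ℝ) < (t:ℝ) := by exact_mod_cast Nat.lt_of_lt_of_le Nat.zero_lt_one ht
    have htb : (0:ℝ) < (t:ℝ) ^ β := Real.rpow_pos_of_pos htpos β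
    rw [Real.rpow_neg htpos.le, hCdef, hΓβdef]
    field_simp
  have h2 := key.div_const C
  rw [div_self hC.ne'] at h2
  exact h2.congr' heq
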